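/- Let G be a simple graph, T a set of vertices of G (terminals), and let G' be the graph obtained from G by adding one new vertex s adjacent exactly to all vertices of T. Then for every set X of vertices of G (so s ∉ X), the following are equivalent: (i) no path in G − X connects two distinct vertices of T ∖ X; (ii) no cycle of G' − X contains the vertex s (i.e., X is a subset feedback vertex set of (G', {s}) ). -/

import Mathlib

open SimpleGraph

def GplusS {V : Type*} (G : SimpleGraph V) (T : Set V) : SimpleGraph (V ⊕ Unit) :=
  SimpleGraph.fromRel fun a b =>
    match a, b with
    | Sum.inl u, Sum.inl v => G.Adj u v
    | Sum.inl u, Sum.inr _ => u ∈ T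
    | _, _ => False

section Aux

variable {V : Type*} {G : SimpleGraph V} {T : Set V} {X : Set V}

lemma gplus_adj_inl_inl {u v : V} :
    (GplusS G T).Adj (Sum.inl u) (Sum.inl v) ↔ G.Adj u v := by
  simp only [GplusS, fromRel_adj]
  constructor
  · rintro ⟨hne, h | h⟩
    · exact h
    · exact h.symm
  · intro h
    exact ⟨by simpa using h.ne, Or.inl h⟩

lemma gplus_adj_inl_inr {u : V} {x : Unit} :
    (GplusS G T).Adj (Sum.inl u) (Sum.inr x) ↔ u ∈ T := by
  simp [GplusS, fromRel_adj]

lemma gplus_adj_inr_inl {u : V} {x : Unit} :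
    (GplusS G T).Adj (Sum.inr x) (Sum.inl u) ↔ u ∈ T := by
  rw [adj_comm]; exact gplus_adj_inl_inr

lemma gplus_not_adj_inr_inr {x y : Unit} :
    ¬ (GplusS G T).Adj (Sum.inr x) (Sum.inr y) := by
  simp [GplusS, fromRel_adj]

lemma mem_W_inl {v : V} :
    Sum.inl v ∈ ((Sum.inl '' X : Set (V ⊕ Unit))ᶜ) ↔ v ∈ (Xᶜ : Set V) := by
  simp

lemma mem_W_inr {x : Unit} :
    Sum.inr x ∈ ((Sum.inl '' X : Set (V ⊕ Unit))ᶜ) := by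
  simp

/-- Lifting a walk in the induced big graph avoiding `s` down to `G - X`. -/
lemma lift_walk {a b : ↥((Sum.inl '' X : Set (V ⊕ Unit))ᶜ)}
    (w : ((GplusS G T).induce ((Sum.inl '' X : Set (V ⊕ Unit))ᶜ)).Walk a b)
    (hs : ∀ v ∈ w.support, (v : V ⊕ Unit) ≠ Sum.inr ())
    {a' b' : ↥(Xᶜ : Set V)} (ha : (a : V ⊕ Unit) = Sum.inl (a' : V))
    (hb : (b : V ⊕ Unit) = Sum.inl (b' : V)) :
    (G.induce (Xᶜ : Set V)).Reachable a' b' := by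
  induction w generalizing a' with
  | nil =>
    have : (Sum.inl (a' : V) : V ⊕ Unit) = Sum.inl (b' : V) := by rw [← ha, hb]
    have : (a' : V) = b' := by simpa using this
    rw [Subtype.ext this]
  | @cons u x c hadj w ih =>
    obtain ⟨t, hx⟩ : ∃ t : V, (x : V ⊕ Unit) = Sum.inl t := by
      cases hx : (x : V ⊕ Unit) with
      | inl t => exact ⟨t, rfl⟩
      | inr y =>
        exact absurd hx (by
          have := hs x (by simp)
          cases y; exact this)
    have hxX : t ∈ (Xᶜ : Set V) := by
      have := x.2
      rw [hx] at this
      simpa using this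
    have hadj' : G.Adj a' t := by
      have : (GplusS G T).Adj (u : V ⊕ Unit) (x : V ⊕ Unit) := hadj
      rw [ha, hx] at this
      exact gplus_adj_inl_inl.mp this
    have hadj'' : (G.induce (Xᶜ : Set V)).Adj a' ⟨t, hxX⟩ := hadj'
    exact hadj''.reachable.trans
      (ih (fun v hv => hs v (by simp [hv])) (a' := ⟨t, hxX⟩) hx hb)

/-- The embedding of `G - X` into the induced big graph. -/
def phi : (G.induce (Xᶜ : Set V)) →g ((GplusS G T).induce ((Sum.inl '' X : Set (V ⊕ Unit))ᶜ)) where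
  toFun v := ⟨Sum.inl (v : V), mem_W_inl.mpr v.2⟩
  map_rel' := by
    intro a b hab
    show (GplusS G T).Adj (Sum.inl (a : V)) (Sum.inl (b : V))
    exact gplus_adj_inl_inl.mpr hab

end Aux

/-- For every set `X` of vertices of `G`, the following are equivalent:
(i) no path in `G − X` connects two distinct vertices of `T ∖ X`;
(ii) no cycle of `G' − X` contains the vertex `s`, where `G'` is obtained from `G` by adding a
new vertex `s` adjacent exactly to all vertices of `T` (i.e. `X` is a subset feedback vertex set
of `(G', {s})`). -/
theorem stmt16 {V : Type*} (G : SimpleGraph V) (T : Set V) (X : Set V) :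
    (∀ a b : ↥(Xᶜ : Set V), (a : V) ∈ T → (b : V) ∈ T → a ≠ b →
      ¬ (G.induce (Xᶜ : Set V)).Reachable a b) ↔
    (∀ (a : ↥((Sum.inl '' X : Set (V ⊕ Unit))ᶜ))
      (c : ((GplusS G T).induce (Sum.inl '' X : Set (V ⊕ Unit))ᶜ).Walk a a),
      c.IsCycle → ∀ b ∈ c.support, (b : V ⊕ Unit) ≠ Sum.inr ()) := by
  constructor
  · -- (i) → (ii)
    intro hyp a c hc b hb hbs
    classical
    have key : ∀ (c2 : ((GplusS G T).induce (Sum.inl '' X : Set (V ⊕ Unit))ᶜ).Walk b b),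
        c2.IsCycle → False := by
      intro c2 hc2
      cases c2 with
      | nil => exact hc2.ne_nil rfl
      | @cons _ x _ hadj p =>
        rw [SimpleGraph.Walk.cons_isCycle_iff] at hc2
        obtain ⟨hp, hedge⟩ := hc2
        obtain ⟨t₁, hx⟩ : ∃ t, (x : V ⊕ Unit) = Sum.inl t := by
          cases hx : (x : V ⊕ Unit) with
          | inl t => exact ⟨t, rfl⟩
          | inr y =>
            have h' : (GplusS G T).Adj (b : V ⊕ Unit) (x : V ⊕ Unit) := hadj
            rw [hbs, hx] at h'
            exact absurd h' gplus_not_adj_inr_inr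
        have ht₁T : t₁ ∈ T := by
          have h' : (GplusS G T).Adj (b : V ⊕ Unit) (x : V ⊕ Unit) := hadj
          rw [hbs, hx] at h'
          exact gplus_adj_inr_inl.mp h'
        have hrp : p.reverse.IsPath := hp.reverse
        have hedge' : s(b, x) ∉ p.reverse.edges := by
          rw [SimpleGraph.Walk.edges_reverse, List.mem_reverse]
          exact hedge
        obtain ⟨y, hadj2, q, hq⟩ : ∃ (y : ↥((Sum.inl '' X : Set (V ⊕ Unit))ᶜ))
            (hadj2 : ((GplusS G T).induce (Sum.inl '' X : Set (V ⊕ Unit))ᶜ).Adj b y)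
            (q : ((GplusS G T).induce (Sum.inl '' X : Set (V ⊕ Unit))ᶜ).Walk y x),
            p.reverse = SimpleGraph.Walk.cons hadj2 q := by
          cases hr : p.reverse with
          | nil => exact absurd rfl hadj.ne
          | cons h q => exact ⟨_, h, q, rfl⟩
        obtain ⟨t₂, hy⟩ : ∃ t, (y : V ⊕ Unit) = Sum.inl t := by
          cases hy : (y : V ⊕ Unit) with
          | inl t => exact ⟨t, rfl⟩
          | inr z =>
            have h' : (GplusS G T).Adj (b : V ⊕ Unit) (y : V ⊕ Unit) := hadj2
            rw [hbs, hy] at h'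
            exact absurd h' gplus_not_adj_inr_inr
        have ht₂T : t₂ ∈ T := by
          have h' : (GplusS G T).Adj (b : V ⊕ Unit) (y : V ⊕ Unit) := hadj2
          rw [hbs, hy] at h'
          exact gplus_adj_inr_inl.mp h'
        have hxy : x ≠ y := by
          rintro rfl
          apply hedge'
          rw [hq]
          simp
        have ht₁X : t₁ ∈ (Xᶜ : Set V) := by
          have := x.2; rw [hx] at this; simpa using this
        have ht₂X : t₂ ∈ (Xᶜ : Set V) := by
          have := y.2; rw [hy] at this; simpa using this
        have hbq : b ∉ q.support := by
          rw [hq, SimpleGraph.Walk.cons_isPath_iff] at hrp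
          exact hrp.2
        have hqs : ∀ v ∈ q.reverse.support, (v : V ⊕ Unit) ≠ Sum.inr () := by
          intro v hv hveq
          have hvb : v = b := Subtype.ext (by rw [hveq, hbs])
          rw [SimpleGraph.Walk.support_reverse, List.mem_reverse] at hv
          exact hbq (hvb ▸ hv)
        have hreach := lift_walk q.reverse hqs (a' := ⟨t₁, ht₁X⟩) (b' := ⟨t₂, ht₂X⟩) hx hy
        exact hyp ⟨t₁, ht₁X⟩ ⟨t₂, ht₂X⟩ ht₁T ht₂T
          (fun h => hxy (Subtype.ext
            (hx.trans ((congrArg Sum.inl (Subtype.ext_iff.mp h)).trans hy.symm)))) hreach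
    exact key (c.rotate b hb) (hc.rotate hb)
  · -- (ii) → (i)
    intro hyp a b haT hbT hab hreach
    classical
    obtain ⟨w⟩ := hreach
    let sW : ↥((Sum.inl '' X : Set (V ⊕ Unit))ᶜ) := ⟨Sum.inr (), mem_W_inr⟩
    let w' := (w.map (phi (G := G) (T := T))).toPath
    have hsupp : ∀ v ∈ (w'.val).support, (v : V ⊕ Unit) ≠ Sum.inr () := by
      intro v hv
      have h1 := SimpleGraph.Walk.support_toPath_subset (w.map (phi (G := G) (T := T))) hv
      rw [SimpleGraph.Walk.support_map] at h1
      obtain ⟨u, _, huv⟩ := List.mem_map.mp h1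
      rw [← huv]
      simp [phi]
    have hsW : sW ∉ w'.val.support := fun h => hsupp sW h rfl
    have h1 : ((GplusS G T).induce (Sum.inl '' X : Set (V ⊕ Unit))ᶜ).Adj sW (phi (G := G) (T := T) a) := by
      show (GplusS G T).Adj (Sum.inr ()) (Sum.inl (a : V))
      exact gplus_adj_inr_inl.mpr haT
    have h2 : ((GplusS G T).induce (Sum.inl '' X : Set (V ⊕ Unit))ᶜ).Adj (phi (G := G) (T := T) b) sW := by
      show (GplusS G T).Adj (Sum.inl (b : V)) (Sum.inr ())
      exact gplus_adj_inl_inr.mpr hbT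
    have hp2 : (w'.val.concat h2).IsPath := by
      rw [← SimpleGraph.Walk.isPath_reverse_iff, SimpleGraph.Walk.reverse_concat]
      refine SimpleGraph.Walk.IsPath.cons (w'.prop.reverse) ?_
      simpa [SimpleGraph.Walk.support_reverse] using hsW
    have hedge : s(sW, phi (G := G) (T := T) a) ∉ (w'.val.concat h2).edges := by
      intro he
      rw [SimpleGraph.Walk.edges_concat] at he
      rw [List.concat_eq_append] at he
      rcases List.mem_append.mp he with he | he
      · exact hsW (SimpleGraph.Walk.fst_mem_support_of_mem_edges _ he)
      · rw [List.mem_singleton] at he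
        rcases Sym2.eq_iff.mp he with ⟨h3, _⟩ | ⟨_, h4⟩
        · exact absurd (congrArg Subtype.val h3) (by simp [sW, phi])
        · exact hab (Subtype.ext (Sum.inl_injective
            (congrArg Subtype.val h4 : (Sum.inl (a : V) : V ⊕ Unit) = Sum.inl (b : V))))
    have hc : (SimpleGraph.Walk.cons h1 (w'.val.concat h2)).IsCycle :=
      SimpleGraph.Path.cons_isCycle ⟨w'.val.concat h2, hp2⟩ h1 hedge
    exact hyp sW _ hc sW (SimpleGraph.Walk.start_mem_support _) rfl
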